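/- Let ρ₁, ρ₂, p₁, p₂, q > 0 and define a₁ = √(ρ₁p₁ + √(ρ₁ρ₂)·q) and a₂ = √(ρ₂p₂ + √(ρ₁ρ₂)·q). Then the quantity E = (a₂/a₁)²·ρ₁p₁ + (a₁/a₂)²·ρ₂p₂ − 2√(ρ₁ρ₂)·q satisfies: E > 0 if and only if q < √(p₁p₂), and E = 0 if and only if q = √(p₁p₂). -/
import Mathlib


theorem stmt_15
    (ρ₁ ρ₂ p₁ p₂ q : ℝ)
    (hρ₁ : 0 < ρ₁) (hρ₂ : 0 < ρ₂) (hp₁ : 0 < p₁) (hp₂ : 0 < p₂) (hq : 0 < q)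
    (a₁ a₂ : ℝ)
    (ha₁ : a₁ = Real.sqrt (ρ₁ * p₁ + Real.sqrt (ρ₁ * ρ₂) * q))
    (ha₂ : a₂ = Real.sqrt (ρ₂ * p₂ + Real.sqrt (ρ₁ * ρ₂) * q)) :
    (0 < (a₂ / a₁) ^ 2 * (ρ₁ * p₁) + (a₁ / a₂) ^ 2 * (ρ₂ * p₂) -
        2 * Real.sqrt (ρ₁ * ρ₂) * q ↔ q < Real.sqrt (p₁ * p₂)) ∧
    ((a₂ / a₁) ^ 2 * (ρ₁ * p₁) + (a₁ / a₂) ^ 2 * (ρ₂ * p₂) -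
        2 * Real.sqrt (ρ₁ * ρ₂) * q = 0 ↔ q = Real.sqrt (p₁ * p₂)) := by
  set s := Real.sqrt (ρ₁ * ρ₂) * q with hs
  have hsp : 0 < s := mul_pos (Real.sqrt_pos.mpr (mul_pos hρ₁ hρ₂)) hq
  have hApos : 0 < ρ₁ * p₁ + s := by positivity
  have hBpos : 0 < ρ₂ * p₂ + s := by positivity
  have ha1sq : a₁ ^ 2 = ρ₁ * p₁ + s := by
    rw [ha₁, Real.sq_sqrt hApos.le]
  have ha2sq : a₂ ^ 2 = ρ₂ * p₂ + s := by
    rw [ha₂, Real.sq_sqrt hBpos.le]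
  have ha1pos : 0 < a₁ := by rw [ha₁]; exact Real.sqrt_pos.mpr hApos
  have ha2pos : 0 < a₂ := by rw [ha₂]; exact Real.sqrt_pos.mpr hBpos
  have hssq : s ^ 2 = ρ₁ * ρ₂ * q ^ 2 := by
    rw [hs, mul_pow, Real.sq_sqrt (mul_pos hρ₁ hρ₂).le]
  have hE : (a₂ / a₁) ^ 2 * (ρ₁ * p₁) + (a₁ / a₂) ^ 2 * (ρ₂ * p₂) -
      2 * Real.sqrt (ρ₁ * ρ₂) * q =
      ((ρ₁ * p₁) * (ρ₂ * p₂) - s ^ 2) * ((ρ₁ * p₁) + (ρ₂ * p₂) + 2 * s) /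
        ((ρ₁ * p₁ + s) * (ρ₂ * p₂ + s)) := by
    have h2 : 2 * Real.sqrt (ρ₁ * ρ₂) * q = 2 * s := by rw [hs]; ring
    rw [h2, div_pow, div_pow, ha1sq, ha2sq]
    field_simp
    ring
  rw [hE]
  have hden : 0 < (ρ₁ * p₁ + s) * (ρ₂ * p₂ + s) := mul_pos hApos hBpos
  have hsum : 0 < (ρ₁ * p₁) + (ρ₂ * p₂) + 2 * s := by positivity
  have hkey : ρ₁ * p₁ * (ρ₂ * p₂) - s ^ 2 = ρ₁ * ρ₂ * (p₁ * p₂ - q ^ 2) := by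
    rw [hssq]; ring
  have hρρ : 0 < ρ₁ * ρ₂ := mul_pos hρ₁ hρ₂
  have hq2 : q < Real.sqrt (p₁ * p₂) ↔ q ^ 2 < p₁ * p₂ := by
    rw [Real.lt_sqrt hq.le]
  have hq2' : q = Real.sqrt (p₁ * p₂) ↔ q ^ 2 = p₁ * p₂ := by
    constructor
    · intro h; rw [h, Real.sq_sqrt (by positivity : (0:ℝ) ≤ p₁ * p₂)]
    · intro h; rw [← h, Real.sqrt_sq hq.le]
  constructor
  · rw [hq2, div_pos_iff]
    constructor
    · rintro (⟨h, _⟩ | ⟨_, h⟩)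
      · nlinarith [hkey, hρρ, hsum, mul_pos hρρ hsum]
      · linarith [hden]
    · intro h
      left
      constructor
      · nlinarith [hkey, hρρ, hsum, mul_pos hρρ hsum]
      · exact hden
  · rw [hq2', div_eq_zero_iff]
    constructor
    · rintro (h | h)
      · rcases mul_eq_zero.mp h with h' | h'
        · rw [hkey] at h'
          rcases mul_eq_zero.mp h' with h'' | h''
          · exact absurd h'' hρρ.ne'
          · linarith
        · linarith
      · linarith [hden]
    · intro h
      left
      apply mul_eq_zero.mpr
      left
      rw [hkey, h]
      ring
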